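/- (Claim II) Let n, d >= 1 and let A = {a_1, ..., a_n} and B = {b_1, ..., b_n} be sequences of vectors in {0,1}^d. Over the alphabet {0,1,#,[,]}, define W = [psi_A(ONE)][psi_A(ZERO)][psi_A(a_1)][psi_A(ZERO)][psi_A(a_2)][psi_A(ZERO)]...[psi_A(a_n)][psi_A(ZERO)][psi_A(ONE)] and U = [psi_B(ONE)][psi_B(b_1)][psi_B(b_2)]...[psi_B(b_n)][psi_B(ONE)], where ZERO and ONE are the all-zero and all-one vectors of dimension d. Then there exist i, j in [1:n] such that a_i and b_j are orthogonal if and only if U is a |W|-subsequence of WW. -/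

import Mathlib

open List

/-- `v` is a `p`-subsequence of `w`: there is a contiguous factor `u` of `w`
of length at most `p` such that `v` is a subsequence of `u`. -/
def PSubseq {α : Type*} (p : ℕ) (v w : List α) : Prop :=
  ∃ u : List α, u <:+: w ∧ u.length ≤ p ∧ v <+ u

/-- The alphabet {0, 1, #, [, ]}. -/
inductive Letter5 : Type
  | zero : Letter5
  | one : Letter5
  | hash : Letter5
  | lb : Letter5
  | rb : Letter5
deriving DecidableEq

/-- `psi_A(0) = 01#`, `psi_A(1) = 00#`. -/
def psiA : Bool → List Letter5
  | false => [.zero, .one, .hash]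
  | true => [.zero, .zero, .hash]

/-- `psi_B(0) = 0#`, `psi_B(1) = 1#`. -/
def psiB : Bool → List Letter5
  | false => [.zero, .hash]
  | true => [.one, .hash]

/-- `psi_A` applied letterwise to a vector in `{0,1}^d`. -/
def psiAvec {d : ℕ} (v : Fin d → Bool) : List Letter5 :=
  (List.ofFn (fun k => psiA (v k))).flatten

/-- `psi_B` applied letterwise to a vector in `{0,1}^d`. -/
def psiBvec {d : ℕ} (v : Fin d → Bool) : List Letter5 :=
  (List.ofFn (fun k => psiB (v k))).flatten

/-- The block `[psi_A(v)]`. -/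
def blockA {d : ℕ} (v : Fin d → Bool) : List Letter5 :=
  Letter5.lb :: (psiAvec v ++ [Letter5.rb])

/-- The block `[psi_B(v)]`. -/
def blockB {d : ℕ} (v : Fin d → Bool) : List Letter5 :=
  Letter5.lb :: (psiBvec v ++ [Letter5.rb])

/-- The word `W = [psi_A(1)][psi_A(0)][psi_A(a_1)][psi_A(0)]...[psi_A(a_n)][psi_A(0)][psi_A(1)]`. -/
def wordW {n d : ℕ} (a : Fin n → Fin d → Bool) : List Letter5 :=
  blockA (fun _ : Fin d => true) ++ blockA (fun _ : Fin d => false) ++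
    (List.ofFn (fun i : Fin n => blockA (a i) ++ blockA (fun _ : Fin d => false))).flatten ++
    blockA (fun _ : Fin d => true)

/-- The word `U = [psi_B(1)][psi_B(b_1)]...[psi_B(b_n)][psi_B(1)]`. -/
def wordU {n d : ℕ} (b : Fin n → Fin d → Bool) : List Letter5 :=
  blockB (fun _ : Fin d => true) ++ (List.ofFn (fun j : Fin n => blockB (b j))).flatten ++
    blockB (fun _ : Fin d => true)

namespace OVAux

/-! ### List versions of `psiA`/`psiB` and the core alignment lemma -/

def psiAl (l : List Bool) : List Letter5 := (l.map psiA).flatten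
def psiBl (l : List Bool) : List Letter5 := (l.map psiB).flatten

@[simp] lemma psiAl_nil : psiAl [] = [] := rfl
@[simp] lemma psiAl_cons (x : Bool) (l : List Bool) : psiAl (x :: l) = psiA x ++ psiAl l := rfl
@[simp] lemma psiBl_nil : psiBl [] = [] := rfl
@[simp] lemma psiBl_cons (x : Bool) (l : List Bool) : psiBl (x :: l) = psiB x ++ psiBl l := rfl

lemma psiAvec_eq {d : ℕ} (v : Fin d → Bool) : psiAvec v = psiAl (List.ofFn v) := by
  simp only [psiAvec, psiAl, List.map_ofFn]; rfl

lemma psiBvec_eq {d : ℕ} (v : Fin d → Bool) : psiBvec v = psiBl (List.ofFn v) := by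
  simp only [psiBvec, psiBl, List.map_ofFn]; rfl

lemma count_hash_psiAl (l : List Bool) : count Letter5.hash (psiAl l) = l.length := by
  induction l with
  | nil => rfl
  | cons x l ih => cases x <;> simp [psiA, count_append, count_cons, ih]

lemma count_hash_psiBl (l : List Bool) : count Letter5.hash (psiBl l) = l.length := by
  induction l with
  | nil => rfl
  | cons x l ih => cases x <;> simp [psiB, count_append, count_cons, ih]

lemma ne_peel {a b : Letter5} {l L : List Letter5} (h : a :: l <+ b :: L) (hne : a ≠ b) :
    a :: l <+ L := by
  cases h with
  | cons _ h => exact h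
  | cons_cons h => exact absurd rfl hne

lemma peel_hash {R S : List Letter5} {y : Bool} (h : (Letter5.hash :: R) <+ psiA y ++ S) :
    R <+ S := by
  have key : ∀ (z1 z2 : Letter5), z1 ≠ .hash → z2 ≠ .hash →
      (Letter5.hash :: R) <+ z1 :: z2 :: Letter5.hash :: S → R <+ S := by
    intro z1 z2 h1 h2 h
    have h := ne_peel h h1.symm
    have h := ne_peel h h2.symm
    cases h with
    | cons _ h => exact ((List.sublist_cons_self _ _).trans h)
    | cons_cons _ h => exact h
  cases y
  · exact key .zero .one (by decide) (by decide) h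
  · exact key .zero .zero (by decide) (by decide) h

lemma core_list : ∀ (lw lv : List Bool), lw.length = lv.length →
    psiBl lv <+ psiAl lw → Forall₂ (fun y x => (y && x) = false) lw lv := by
  intro lw
  induction lw with
  | nil =>
    intro lv h _
    cases lv with
    | nil => exact .nil
    | cons _ _ => simp at h
  | cons y lw ih =>
    intro lv hlen hsub
    cases lv with
    | nil => simp at hlen
    | cons x lv =>
      have hlen' : lw.length = lv.length := by simpa using hlen
      have hsub' : psiB x ++ psiBl lv <+ psiA y ++ psiAl lw := by simpa using hsub
      have htail : psiBl lv <+ psiAl lw := by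
        have h1 : Letter5.hash :: psiBl lv <+ psiB x ++ psiBl lv := by
          cases x <;> exact List.Sublist.cons _ (List.Sublist.refl _)
        exact peel_hash (h1.trans hsub')
      refine Forall₂.cons ?_ (ih lv hlen' htail)
      by_contra hxy
      have hy : y = true := by cases y <;> simp_all
      have hx : x = true := by cases x <;> simp_all
      subst hy; subst hx
      have h1 : Letter5.one :: Letter5.hash :: psiBl lv <+
          Letter5.zero :: Letter5.zero :: Letter5.hash :: psiAl lw := by
        simpa [psiB, psiA] using hsub'
      have h2 := ne_peel h1 (by decide)
      have h3 := ne_peel h2 (by decide)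
      have h4 := ne_peel h3 (by decide)
      have h5 := h4.count_le Letter5.hash
      simp [count_cons, count_hash_psiBl, count_hash_psiAl] at h5
      omega

lemma core_fin {d : ℕ} {v w : Fin d → Bool} (h : psiBvec v <+ psiAvec w) :
    ∀ k, (w k && v k) = false := by
  rw [psiBvec_eq, psiAvec_eq] at h
  have h2 := core_list (List.ofFn w) (List.ofFn v) (by simp) h
  intro k
  have h3 := (List.forall₂_iff_get.mp h2).2 k (by simp) (by simp)
  simp only [List.get_eq_getElem, List.getElem_ofFn] at h3
  cases hw : w k <;> cases hv : v k <;> simp_all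

lemma blockB_sublist_blockA_orth {d : ℕ} {v w : Fin d → Bool} (h : blockB v <+ blockA w) :
    ∀ k, (w k && v k) = false := by
  have h1 : psiBvec v ++ [Letter5.rb] <+ psiAvec w ++ [Letter5.rb] :=
    List.cons_sublist_cons.mp h
  have h2 : psiBvec v <+ psiAvec w := by
    rw [← List.reverse_sublist] at h1 ⊢
    simpa [List.reverse_append, List.cons_sublist_cons] using h1
  exact core_fin h2

lemma psiB_sub_psiA {x y : Bool} (h : (y && x) = false) : psiB x <+ psiA y := by
  cases x <;> cases y <;> simp_all [psiB, psiA]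

lemma sublist_flatten_of_forall₂ {α : Type*} :
    ∀ {L1 L2 : List (List α)}, Forall₂ (· <+ ·) L1 L2 → L1.flatten <+ L2.flatten := by
  intro L1 L2 h
  induction h with
  | nil => simp
  | cons h _ ih => simpa using h.append ih

lemma blockB_sub_blockA_of_orth {d : ℕ} {v w : Fin d → Bool}
    (h : ∀ k, (w k && v k) = false) : blockB v <+ blockA w := by
  refine List.cons_sublist_cons.mpr (List.Sublist.append ?_ (List.Sublist.refl _))
  unfold psiBvec psiAvec
  apply sublist_flatten_of_forall₂
  refine List.forall₂_iff_get.mpr ⟨by simp, ?_⟩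
  intro i h1 h2
  simp only [List.get_eq_getElem, List.getElem_ofFn]
  exact psiB_sub_psiA (h _)

end OVAux
namespace OVAux

/-! ### Structural vector-list definitions -/

def Zv (d : ℕ) : Fin d → Bool := fun _ => false
def Ov (d : ℕ) : Fin d → Bool := fun _ => true

variable {d : ℕ}

def flA (l : List (Fin d → Bool)) : List Letter5 := (l.map blockA).flatten
def flB (l : List (Fin d → Bool)) : List Letter5 := (l.map blockB).flatten
def pv (l : List (Fin d → Bool)) : List (Fin d → Bool) := (l.map (fun v => [v, Zv d])).flatten
def wvl (As : List (Fin d → Bool)) : List (Fin d → Bool) := Ov d :: Zv d :: (pv As ++ [Ov d])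

@[simp] lemma flA_nil : flA ([] : List (Fin d → Bool)) = [] := rfl
@[simp] lemma flA_cons (v : Fin d → Bool) (l : List (Fin d → Bool)) :
    flA (v :: l) = blockA v ++ flA l := rfl
@[simp] lemma flA_append (l1 l2 : List (Fin d → Bool)) : flA (l1 ++ l2) = flA l1 ++ flA l2 := by
  simp [flA]
@[simp] lemma flB_nil : flB ([] : List (Fin d → Bool)) = [] := rfl
@[simp] lemma flB_cons (v : Fin d → Bool) (l : List (Fin d → Bool)) :
    flB (v :: l) = blockB v ++ flB l := rfl
@[simp] lemma flB_append (l1 l2 : List (Fin d → Bool)) : flB (l1 ++ l2) = flB l1 ++ flB l2 := by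
  simp [flB]
@[simp] lemma pv_nil : pv ([] : List (Fin d → Bool)) = [] := rfl
@[simp] lemma pv_cons (v : Fin d → Bool) (l : List (Fin d → Bool)) :
    pv (v :: l) = v :: Zv d :: pv l := rfl
@[simp] lemma pv_append (l1 l2 : List (Fin d → Bool)) : pv (l1 ++ l2) = pv l1 ++ pv l2 := by
  simp [pv]

lemma length_psiAl (l : List Bool) : (psiAl l).length = 3 * l.length := by
  induction l with
  | nil => rfl
  | cons x l ih => cases x <;> simp [psiA, ih] <;> omega

lemma length_blockA (v : Fin d → Bool) : (blockA v).length = 3 * d + 2 := by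
  simp [blockA, psiAvec_eq, length_psiAl]

lemma length_flA (l : List (Fin d → Bool)) : (flA l).length = l.length * (3 * d + 2) := by
  induction l with
  | nil => simp
  | cons v l ih => simp [length_blockA, ih]; ring

lemma length_pv (l : List (Fin d → Bool)) : (pv l).length = 2 * l.length := by
  induction l with
  | nil => rfl
  | cons v l ih => simp [ih]; omega

lemma wordW_eq {n : ℕ} (a : Fin n → Fin d → Bool) : wordW a = flA (wvl (List.ofFn a)) := by
  have flA_pv : ∀ l : List (Fin d → Bool),
      flA (pv l) = (l.map (fun v => blockA v ++ blockA (Zv d))).flatten := by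
    intro l
    induction l with
    | nil => rfl
    | cons v l ih => simp [ih]
  simp only [wordW, wvl, flA_pv, flA_cons, flA_append, List.map_ofFn, Function.comp_def,
    List.append_assoc, flA_nil, List.append_nil]
  rfl

lemma wordU_eq {n : ℕ} (b : Fin n → Fin d → Bool) :
    wordU b = flB (Ov d :: (List.ofFn b ++ [Ov d])) := by
  simp only [wordU, flB_cons, flB_append, flB_nil, flB, List.map_ofFn, Function.comp_def,
    List.append_nil, List.append_assoc, List.map_cons, List.map_append, List.flatten_cons,
    List.flatten_append, List.map_nil, List.flatten_nil]
  rfl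

/-! ### Forward direction: building the embedding -/

lemma blockB_sub_blockZ (v : Fin d → Bool) : blockB v <+ blockA (Zv d) :=
  blockB_sub_blockA_of_orth (fun _ => rfl)

lemma ch1 : ∀ (ms ls : List (Fin d → Bool)), ms.length ≤ ls.length → flB ms <+ flA (pv ls) := by
  intro ms
  induction ms with
  | nil => intro ls _; simp
  | cons m ms ih =>
    intro ls hl
    cases ls with
    | nil => simp at hl
    | cons l ls =>
      have h2 : flA (pv (l :: ls)) = (blockA l ++ blockA (Zv d)) ++ flA (pv ls) := by
        simp [List.append_assoc]
      rw [flB_cons, h2]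
      exact ((blockB_sub_blockZ m).trans (List.sublist_append_right _ _)).append
        (ih ls (by simpa using hl))

lemma ch2 (ms ls : List (Fin d → Bool)) (h : ms.length ≤ ls.length + 1) :
    flB ms <+ blockA (Zv d) ++ flA (pv ls) := by
  cases ms with
  | nil => simp
  | cons m ms =>
    rw [flB_cons]
    exact (blockB_sub_blockZ m).append (ch1 ms ls (by simpa using h))

lemma fwd_main {v w : Fin d → Bool} (P Q S T : List (Fin d → Bool))
    (hP : P.length = S.length + 1) (hQ : Q.length ≤ T.length + 1)
    (horth : ∀ k, (w k && v k) = false) :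
    flB (P ++ v :: Q) <+ flA (Zv d :: (pv (S ++ w :: T))) := by
  cases P with
  | nil => simp at hP
  | cons p P =>
    have key : blockB p ++ (flB P ++ (blockB v ++ flB Q)) <+
        blockA (Zv d) ++ (flA (pv S) ++ (blockA w ++ (blockA (Zv d) ++ flA (pv T)))) := by
      refine (blockB_sub_blockZ p).append ?_
      refine (ch1 P S (by simp at hP; omega)).append ?_
      exact (blockB_sub_blockA_of_orth horth).append (ch2 Q T hQ)
    simpa [List.append_assoc] using key

lemma fwd_wrap1 {v w : Fin d → Bool} (P Q₁ Q₂ S T₁ T₂ : List (Fin d → Bool)) (e : Fin d → Bool)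
    (hP : P.length = S.length + 1) (h1 : Q₁.length ≤ T₁.length + 1) (h2 : Q₂.length ≤ T₂.length)
    (horth : ∀ k, (w k && v k) = false) :
    flB (P ++ v :: (Q₁ ++ e :: Q₂)) <+
      flA (Zv d :: (pv (S ++ w :: T₁) ++ (Ov d :: Ov d :: Zv d :: pv T₂))) := by
  cases P with
  | nil => simp at hP
  | cons p P =>
    have key : blockB p ++ (flB P ++ (blockB v ++ ((flB Q₁) ++ ((blockB e) ++ flB Q₂)))) <+
        blockA (Zv d) ++ (flA (pv S) ++ (blockA w ++ ((blockA (Zv d) ++ flA (pv T₁)) ++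
          ((blockA (Ov d) ++ blockA (Ov d) ++ blockA (Zv d)) ++ flA (pv T₂))))) := by
      refine (blockB_sub_blockZ p).append ?_
      refine (ch1 P S (by simp at hP; omega)).append ?_
      refine (blockB_sub_blockA_of_orth horth).append ?_
      refine (ch2 Q₁ T₁ h1).append ?_
      exact ((blockB_sub_blockZ e).trans (List.sublist_append_right _ _)).append (ch1 Q₂ T₂ h2)
    simpa [List.append_assoc] using key

lemma fwd_wrap2 {v w : Fin d → Bool} (P₁ P₂ Q D S T : List (Fin d → Bool)) (e : Fin d → Bool)
    (h1 : P₁.length = D.length + 1) (h2 : P₂.length = S.length) (h3 : Q.length ≤ T.length + 1)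
    (horth : ∀ k, (w k && v k) = false) :
    flB (P₁ ++ e :: (P₂ ++ v :: Q)) <+
      flA (Zv d :: (pv D ++ (Ov d :: Ov d :: Zv d :: pv (S ++ w :: T)))) := by
  cases P₁ with
  | nil => simp at h1
  | cons p P₁ =>
    have key : blockB p ++ (flB P₁ ++ ((blockB e) ++ (flB P₂ ++ (blockB v ++ flB Q)))) <+
        blockA (Zv d) ++ (flA (pv D) ++ ((blockA (Ov d) ++ blockA (Ov d) ++ blockA (Zv d)) ++
          (flA (pv S) ++ (blockA w ++ (blockA (Zv d) ++ flA (pv T)))))) := by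
      refine (blockB_sub_blockZ p).append ?_
      refine (ch1 P₁ D (by simp at h1; omega)).append ?_
      refine ((blockB_sub_blockZ e).trans (List.sublist_append_right _ _)).append ?_
      refine (ch1 P₂ S (by omega)).append ?_
      exact (blockB_sub_blockA_of_orth horth).append (ch2 Q T h3)
    simpa [List.append_assoc] using key

lemma win_infix (As : List (Fin d → Bool)) (m : ℕ) (hm : m < As.length) :
    flA (Zv d :: (pv (As.drop (m+1)) ++ (Ov d :: Ov d :: Zv d :: pv (As.take m)))) <:+:
      flA (wvl As ++ wvl As) := by
  refine ⟨flA (Ov d :: Zv d :: (pv (As.take m) ++ [As[m]])),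
          flA (As[m] :: Zv d :: (pv (As.drop (m+1)) ++ [Ov d])), ?_⟩
  rw [← flA_append, ← flA_append]
  congr 1
  have key : ∀ (T D : List (Fin d → Bool)) (e : Fin d → Bool),
      (Ov d :: Zv d :: (pv T ++ [e])) ++
        (Zv d :: (pv D ++ (Ov d :: Ov d :: Zv d :: pv T))) ++
        (e :: Zv d :: (pv D ++ [Ov d])) = wvl (T ++ e :: D) ++ wvl (T ++ e :: D) := by
    intro T D e
    simp [wvl, List.append_assoc]
  have hsplit : As = As.take m ++ As[m] :: As.drop (m+1) := by
    conv_lhs => rw [← List.take_append_drop m As, List.drop_eq_getElem_cons hm]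
  rw [key (As.take m) (As.drop (m+1)) As[m], ← hsplit]

end OVAux
namespace OVAux

lemma list_split {α : Type*} (l : List α) (k : ℕ) (hk : k < l.length) :
    l = l.take k ++ l[k] :: l.drop (k+1) := by
  conv_lhs => rw [← List.take_append_drop k l, List.drop_eq_getElem_cons hk]

lemma split_at_fin {α : Type*} {n : ℕ} (f : Fin n → α) (i : Fin n) :
    List.ofFn f = (List.ofFn f).take (i:ℕ) ++ f i :: (List.ofFn f).drop ((i:ℕ)+1) := by
  have h := list_split (List.ofFn f) (i:ℕ) (by simpa using i.isLt)
  rwa [List.getElem_ofFn, Fin.eta] at h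

lemma cons_split {α : Type*} {n : ℕ} (f : Fin n → α) (i : Fin n) (x y : α) :
    x :: (List.ofFn f ++ [y]) =
      (x :: (List.ofFn f).take (i:ℕ)) ++ f i :: ((List.ofFn f).drop ((i:ℕ)+1) ++ [y]) := by
  conv_lhs => rw [split_at_fin f i]
  simp

variable {d : ℕ}

lemma forward {n : ℕ} (hn : 1 ≤ n) (hd : 1 ≤ d) (a b : Fin n → Fin d → Bool)
    (i j : Fin n) (horth : ∀ k, (a i k && b j k) = false) :
    PSubseq (wordW a).length (wordU b) (wordW a ++ wordW a) := by
  have hi := i.isLt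
  have hj := j.isLt
  have hAs : (List.ofFn a).length = n := by simp
  have hBs : (List.ofFn b).length = n := by simp
  have hWW : wordW a ++ wordW a = flA (wvl (List.ofFn a) ++ wvl (List.ofFn a)) := by
    rw [flA_append, ← wordW_eq]
  have hwvl : (wvl (List.ofFn a)).length = 2 * n + 3 := by
    simp [wvl, length_pv, hAs] <;> omega
  have hlenW : (wordW a).length = (2 * n + 3) * (3 * d + 2) := by
    rw [wordW_eq, length_flA, hwvl]
  rcases lt_trichotomy (j : ℕ) (i : ℕ) with hij | hij | hij
  · -- j < i : wrap case 1
    set m : ℕ := ↑i - ↑j - 1 with hm_def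
    have hmlt : m < (List.ofFn a).length := by rw [hAs]; omega
    refine ⟨flA (Zv d :: (pv ((List.ofFn a).drop (m+1)) ++
      (Ov d :: Ov d :: Zv d :: pv ((List.ofFn a).take m)))), ?_, ?_, ?_⟩
    · rw [hWW]; exact win_infix (List.ofFn a) m hmlt
    · rw [length_flA, hlenW]
      refine Nat.mul_le_mul_right _ ?_
      simp [length_pv, hAs] <;> omega
    · rw [wordU_eq]
      -- A-side rewrite
      have hidx : ((List.ofFn a).drop (m+1))[(j:ℕ)]'(by simp; omega) = a i := by
        rw [List.getElem_drop, List.getElem_ofFn]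
        exact congrArg a (Fin.val_injective (show m+1+(j:ℕ) = (i:ℕ) by omega))
      have hD : (List.ofFn a).drop (m+1) =
          ((List.ofFn a).drop (m+1)).take (j:ℕ) ++ a i :: (List.ofFn a).drop ((i:ℕ)+1) := by
        have h1 := list_split ((List.ofFn a).drop (m+1)) (j:ℕ) (by simp; omega)
        rw [hidx, List.drop_drop, show m+1+((j:ℕ)+1) = (i:ℕ)+1 from by omega] at h1
        exact h1
      rw [show pv ((List.ofFn a).drop (m+1)) =
        pv (((List.ofFn a).drop (m+1)).take (j:ℕ) ++ a i :: (List.ofFn a).drop ((i:ℕ)+1))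
        from by rw [← hD]]
      -- U-side rewrites
      rw [cons_split b j (Ov d) (Ov d)]
      have hRlen : ((List.ofFn b).drop ((j:ℕ)+1) ++ [Ov d]).length = n - ↑j := by
        simp [hBs]; omega
      have hsplitR := list_split ((List.ofFn b).drop ((j:ℕ)+1) ++ [Ov d]) (n - ↑i)
        (by rw [hRlen]; omega)
      rw [show (List.ofFn b).drop ((j:ℕ)+1) ++ [Ov d] =
        ((List.ofFn b).drop ((j:ℕ)+1) ++ [Ov d]).take (n-↑i) ++
        (((List.ofFn b).drop ((j:ℕ)+1) ++ [Ov d])[n-↑i]'(by rw [hRlen]; omega)) ::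
        ((List.ofFn b).drop ((j:ℕ)+1) ++ [Ov d]).drop (n-↑i+1) from hsplitR]
      refine fwd_wrap1 _ _ _ _ _ _ _ ?_ ?_ ?_ horth
      · simp [hBs, hAs] <;> omega
      · simp [hBs, hAs] <;> omega
      · simp [hBs, hAs] <;> omega
  · -- i = j : no wrap
    refine ⟨flA (Zv d :: pv (List.ofFn a)), ?_, ?_, ?_⟩
    · rw [hWW]
      refine ⟨flA [Ov d], flA (Ov d :: wvl (List.ofFn a)), ?_⟩
      rw [← flA_append, ← flA_append]
      congr 1
      simp [wvl, List.append_assoc]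
    · rw [length_flA, hlenW]
      refine Nat.mul_le_mul_right _ ?_
      simp [length_pv, hAs] <;> omega
    · rw [wordU_eq]
      rw [cons_split b j (Ov d) (Ov d)]
      rw [show pv (List.ofFn a) =
        pv ((List.ofFn a).take (i:ℕ) ++ a i :: (List.ofFn a).drop ((i:ℕ)+1))
        from by rw [← split_at_fin a i]]
      refine fwd_main _ _ _ _ ?_ ?_ horth
      · simp [hBs, hAs] <;> omega
      · simp [hBs, hAs] <;> omega
  · -- i < j : wrap case 2
    set m : ℕ := n - ((j:ℕ) - ↑i) with hm_def
    have hmlt : m < (List.ofFn a).length := by rw [hAs]; omega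
    refine ⟨flA (Zv d :: (pv ((List.ofFn a).drop (m+1)) ++
      (Ov d :: Ov d :: Zv d :: pv ((List.ofFn a).take m)))), ?_, ?_, ?_⟩
    · rw [hWW]; exact win_infix (List.ofFn a) m hmlt
    · rw [length_flA, hlenW]
      refine Nat.mul_le_mul_right _ ?_
      simp [length_pv, hAs] <;> omega
    · rw [wordU_eq]
      -- A-side rewrite : inside take m
      have hidx : ((List.ofFn a).take m)[(i:ℕ)]'(by simp; omega) = a i := by
        rw [List.getElem_take, List.getElem_ofFn]
      have hT : (List.ofFn a).take m =
          ((List.ofFn a).take m).take (i:ℕ) ++ a i :: ((List.ofFn a).take m).drop ((i:ℕ)+1) := by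
        have h1 := list_split ((List.ofFn a).take m) (i:ℕ) (by simp; omega)
        rw [hidx] at h1
        exact h1
      rw [show pv ((List.ofFn a).take m) =
        pv (((List.ofFn a).take m).take (i:ℕ) ++ a i :: ((List.ofFn a).take m).drop ((i:ℕ)+1))
        from by rw [← hT]]
      -- U-side
      set jf : Fin n := ⟨(j:ℕ) - ↑i - 1, by omega⟩ with hjf_def
      rw [cons_split b jf (Ov d) (Ov d)]
      have hidx2 : ((List.ofFn b).drop ((jf:ℕ)+1))[(i:ℕ)]'(by simp [hjf_def]; omega) = b j := by
        rw [List.getElem_drop, List.getElem_ofFn]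
        exact congrArg b (Fin.val_injective (show (j:ℕ) - ↑i - 1 + 1 + (i:ℕ) = (j:ℕ) by omega))
      have hsplit2 : (List.ofFn b).drop ((jf:ℕ)+1) ++ [Ov d] =
          ((List.ofFn b).drop ((jf:ℕ)+1)).take (i:ℕ) ++
            b j :: ((List.ofFn b).drop ((j:ℕ)+1) ++ [Ov d]) := by
        have h1 := list_split ((List.ofFn b).drop ((jf:ℕ)+1)) (i:ℕ) (by simp [hjf_def]; omega)
        rw [hidx2, List.drop_drop, show (jf:ℕ)+1+((i:ℕ)+1) = (j:ℕ)+1 from by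
          show (j:ℕ) - ↑i - 1 + 1 + (↑i+1) = (j:ℕ)+1
          omega] at h1
        conv_lhs => rw [h1]
        simp [List.append_assoc]
      rw [hsplit2]
      refine fwd_wrap2 _ _ _ _ _ _ _ ?_ ?_ ?_ horth
      · simp [hBs, hAs, hjf_def] <;> omega
      · simp [hBs, hAs, hjf_def] <;> omega
      · simp [hBs, hAs] <;> omega

end OVAux
namespace OVAux

variable {d : ℕ}

lemma mem_psiAl {c : Letter5} {l : List Bool} (h : c ∈ psiAl l) :
    c = .zero ∨ c = .one ∨ c = .hash := by
  induction l with
  | nil => simp [psiAl] at h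
  | cons x l ih =>
    rw [psiAl_cons, List.mem_append] at h
    rcases h with h | h
    · cases x <;> simp [psiA] at h <;> tauto
    · exact ih h

lemma lb_not_mem_psiAvec (v : Fin d → Bool) : Letter5.lb ∉ psiAvec v := by
  rw [psiAvec_eq]; intro h; rcases mem_psiAl h with h | h | h <;> simp at h

lemma rb_not_mem_psiAvec (v : Fin d → Bool) : Letter5.rb ∉ psiAvec v := by
  rw [psiAvec_eq]; intro h; rcases mem_psiAl h with h | h | h <;> simp at h

lemma nice {α : Type*} {a : α} {X P Q : List α} (h : a :: X = P ++ a :: Q) (ha : a ∉ X) :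
    P = [] ∧ X = Q := by
  cases P with
  | nil => simpa using h
  | cons p P =>
    simp only [List.cons_append, List.cons.injEq] at h
    obtain ⟨rfl, h2⟩ := h
    exact absurd (h2 ▸ List.mem_append_right P (List.mem_cons_self (a := a) (l := Q))) ha

lemma rbpos : ∀ (ws : List (Fin d → Bool)) (F₁ F₂ : List Letter5),
    flA ws = F₁ ++ Letter5.rb :: F₂ →
    ∃ ws₁ ws₂, ws = ws₁ ++ ws₂ ∧ ws₁ ≠ [] ∧ flA ws₁ = F₁ ++ [Letter5.rb] ∧ flA ws₂ = F₂ := by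
  intro ws
  induction ws with
  | nil =>
    intro F₁ F₂ h
    exact absurd h (by simp)
  | cons w ws ih =>
    intro F₁ F₂ h
    rw [flA_cons] at h
    rcases List.append_eq_append_iff.mp h with ⟨a', ha1, ha2⟩ | ⟨c', hc1, hc2⟩
    · obtain ⟨ws₁, ws₂, rfl, hne, he1, he2⟩ := ih a' F₂ ha2
      exact ⟨w :: ws₁, ws₂, rfl, by simp, by rw [flA_cons, he1, ha1, List.append_assoc], he2⟩
    · cases c' with
      | nil =>
        cases ws with
        | nil => simp at hc2
        | cons w' ws' =>
          rw [List.nil_append, flA_cons, blockA] at hc2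
          exact absurd (congrArg List.head? hc2) (by simp)
      | cons c c'' =>
        simp only [List.cons_append, List.cons.injEq] at hc2
        obtain ⟨rfl, hF₂⟩ := hc2
        have hb : blockA w = F₁ ++ Letter5.rb :: c'' := hc1
        have hrev : Letter5.rb :: ((psiAvec w).reverse ++ [Letter5.lb]) =
            c''.reverse ++ Letter5.rb :: F₁.reverse := by
          have h2 := congrArg List.reverse hb
          simpa [blockA, List.reverse_append] using h2
        have hn := nice hrev (by
          intro hmem
          rcases List.mem_append.mp hmem with h3 | h3
          · exact rb_not_mem_psiAvec w (List.mem_reverse.mp h3)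
          · simp at h3)
        have hc'' : c'' = [] := by
          have := hn.1
          simpa using congrArg List.reverse this
        subst hc''
        refine ⟨[w], ws, rfl, by simp, ?_, by rw [hF₂]; simp⟩
        simp [hb]

lemma split_sub (ws : List (Fin d → Bool)) (X Y : List Letter5)
    (h : (X ++ Letter5.rb :: Y) <+ flA ws) :
    ∃ ws₁ ws₂, ws = ws₁ ++ ws₂ ∧ ws₁ ≠ [] ∧ (X ++ [Letter5.rb]) <+ flA ws₁ ∧ Y <+ flA ws₂ := by
  rw [show X ++ Letter5.rb :: Y = (X ++ [Letter5.rb]) ++ Y by simp] at h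
  rcases List.append_sublist_iff.mp h with ⟨F₁, F₂, hF, h1, h2⟩
  rcases List.append_sublist_iff.mp h1 with ⟨H₁, H₂, hH, hX, hrb⟩
  have hmem : Letter5.rb ∈ H₂ := List.singleton_sublist.mp hrb
  obtain ⟨s, t, rfl⟩ := List.append_of_mem hmem
  have hfl : flA ws = (H₁ ++ s) ++ Letter5.rb :: (t ++ F₂) := by
    rw [hF, hH]; simp [List.append_assoc]
  obtain ⟨ws₁, ws₂, rfl, hne, he1, he2⟩ := rbpos _ _ _ hfl
  refine ⟨ws₁, ws₂, rfl, hne, ?_, ?_⟩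
  · rw [he1]; exact (hX.trans (List.sublist_append_left H₁ s)).append (List.Sublist.refl _)
  · rw [he2]; exact h2.trans (List.sublist_append_right t F₂)

lemma emb : ∀ (us ws : List (Fin d → Bool)), flB us <+ flA ws →
    ∃ Is : List (List (Fin d → Bool)), ∃ gl : List (Fin d → Bool),
      ws = Is.flatten ++ gl ∧
      Forall₂ (fun u I => I ≠ [] ∧ blockB u <+ flA I) us Is := by
  intro us
  induction us with
  | nil => intro ws _; exact ⟨[], ws, by simp, .nil⟩
  | cons u us ih =>
    intro ws h
    rw [flB_cons, show blockB u ++ flB us = (Letter5.lb :: psiBvec u) ++ Letter5.rb :: flB us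
      from by simp [blockB]] at h
    obtain ⟨ws₁, ws₂, rfl, hne, h1, h2⟩ := split_sub ws _ _ h
    obtain ⟨Is, gl, rfl, hf⟩ := ih ws₂ h2
    exact ⟨ws₁ :: Is, gl, by simp [List.append_assoc], .cons ⟨hne, by simpa [blockB] using h1⟩ hf⟩

lemma head_align {α : Type*} {a : α} {l u : List α} (h : a :: l <+ u) :
    ∃ u₁ u₂, u = u₁ ++ a :: u₂ ∧ l <+ u₂ := by
  rcases List.cons_sublist_iff.mp h with ⟨r₁, r₂, hu, ha, hl⟩
  obtain ⟨s, t, rfl⟩ := List.append_of_mem ha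
  exact ⟨s, t ++ r₂, by rw [hu]; simp [List.append_assoc],
    hl.trans (List.sublist_append_right t r₂)⟩

lemma suff_blocks : ∀ (vs : List (Fin d → Bool)) (M : List Letter5),
    (Letter5.lb :: M) <:+ flA vs → ∃ vs₂, vs₂ <:+ vs ∧ Letter5.lb :: M = flA vs₂ := by
  intro vs
  induction vs with
  | nil =>
    intro M h
    rw [flA_nil] at h
    have h2 := List.suffix_nil.mp h
    simp at h2
  | cons w vs ih =>
    intro M h
    rw [flA_cons] at h
    obtain ⟨pre, hpre⟩ := h
    rcases List.append_eq_append_iff.mp hpre with ⟨a', ha1, ha2⟩ | ⟨c', hc1, hc2⟩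
    · cases a' with
      | nil =>
        refine ⟨vs, List.suffix_cons w vs, ?_⟩
        simpa using ha2
      | cons x a'' =>
        have hx : Letter5.lb = x ∧ M = a'' ++ flA vs := by simpa using ha2
        obtain ⟨hlb, hM⟩ := hx
        subst hlb
        have hn := nice (show Letter5.lb :: (psiAvec w ++ [Letter5.rb]) =
            pre ++ Letter5.lb :: a'' from by rw [← blockA]; exact ha1) (by
          intro hmem
          rcases List.mem_append.mp hmem with h3 | h3
          · exact lb_not_mem_psiAvec w h3
          · simp at h3)
        obtain ⟨hprenil, htail⟩ := hn
        refine ⟨w :: vs, List.suffix_refl _, ?_⟩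
        rw [flA_cons, blockA]
        simp [hM, ← htail, List.append_assoc]
    · obtain ⟨vs₂, hsuf, heq⟩ := ih M ⟨c', hc2.symm⟩
      exact ⟨vs₂, hsuf.trans (List.suffix_cons w vs), heq⟩

lemma pref_blocks : ∀ (vs : List (Fin d → Bool)) (P : List Letter5),
    (P ++ [Letter5.rb]) <+: flA vs → ∃ vs₁, vs₁ <+: vs ∧ P ++ [Letter5.rb] = flA vs₁ := by
  intro vs
  induction vs with
  | nil =>
    intro P h
    rw [flA_nil] at h
    have h2 := List.prefix_nil.mp h
    simp at h2
  | cons w vs ih =>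
    intro P h
    rw [flA_cons] at h
    obtain ⟨rest, hrest⟩ := h
    rcases List.append_eq_append_iff.mp hrest.symm with ⟨a', ha1, ha2⟩ | ⟨c', hc1, hc2⟩
    · -- ha1 : P ++ [rb] = blockA w ++ a', ha2 : flA vs = a' ++ rest
      rcases List.eq_nil_or_concat a' with rfl | ⟨a'', z, rfl⟩

      · refine ⟨[w], ⟨vs, by simp⟩, ?_⟩
        rw [ha1]; simp
      · rw [List.concat_eq_append] at ha1 ha2
        have hz : z = Letter5.rb := by
          have h1 := congrArg List.getLast? ha1
          rw [List.getLast?_concat] at h1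
          rw [show blockA w ++ (a'' ++ [z]) = (blockA w ++ a'') ++ [z] from by
            simp [List.append_assoc], List.getLast?_concat] at h1
          simpa using h1.symm
        subst hz
        obtain ⟨vs₁, hvs₁, heq⟩ := ih a'' ⟨rest, ha2.symm⟩
        refine ⟨w :: vs₁, ?_, ?_⟩
        · exact (List.cons_prefix_cons).mpr ⟨rfl, hvs₁⟩
        · rw [ha1, flA_cons, heq]
    · -- hc1 : blockA w = (P ++ [rb]) ++ c', hc2 : rest = c' ++ flA vs
      have hrev : Letter5.rb :: ((psiAvec w).reverse ++ [Letter5.lb]) =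
          c'.reverse ++ Letter5.rb :: P.reverse := by
        have h2 := congrArg List.reverse hc1
        simpa [blockA, List.reverse_append] using h2
      have hn := nice hrev (by
        intro hmem
        rcases List.mem_append.mp hmem with h3 | h3
        · exact rb_not_mem_psiAvec w (List.mem_reverse.mp h3)
        · simp at h3)
      have hc' : c' = [] := by simpa using congrArg List.reverse hn.1
      subst hc'
      refine ⟨[w], ⟨vs, by simp⟩, ?_⟩
      rw [show P ++ [Letter5.rb] = blockA w from by rw [hc1]; simp]
      simp

lemma flB_shape : ∀ (us : List (Fin d → Bool)), us ≠ [] →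
    ∃ M, flB us = Letter5.lb :: (M ++ [Letter5.rb]) := by
  intro us
  induction us with
  | nil => intro h; simp at h
  | cons u us ih =>
    intro _
    cases us with
    | nil => exact ⟨psiBvec u, by simp [flB, blockB]⟩
    | cons u' us' =>
      obtain ⟨M', hM'⟩ := ih (by simp)
      refine ⟨psiBvec u ++ [Letter5.rb] ++ Letter5.lb :: M', ?_⟩
      rw [flB_cons, hM', blockB]
      simp [List.append_assoc]

lemma trim (vs : List (Fin d → Bool)) (M u : List Letter5)
    (hu : u <:+: flA vs) (hsub : (Letter5.lb :: (M ++ [Letter5.rb])) <+ u) :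
    ∃ vs', vs' <:+: vs ∧ (Letter5.lb :: (M ++ [Letter5.rb])) <+ flA vs' ∧
      (flA vs').length ≤ u.length := by
  obtain ⟨u₁, u₂, rfl, hM⟩ := head_align hsub
  have hrev : Letter5.rb :: M.reverse <+ u₂.reverse := by
    simpa [List.reverse_append] using List.reverse_sublist.mpr hM
  obtain ⟨r₁, r₂, hrr, hM2⟩ := head_align hrev
  have hu₂ : u₂ = (r₂.reverse ++ [Letter5.rb]) ++ r₁.reverse := by
    have h2 := congrArg List.reverse hrr
    simpa [List.reverse_append] using h2
  have hsubu' : Letter5.lb :: (M ++ [Letter5.rb]) <+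
      Letter5.lb :: (r₂.reverse ++ [Letter5.rb]) := by
    refine List.cons_sublist_cons.mpr (List.Sublist.append ?_ (List.Sublist.refl _))
    exact List.reverse_sublist.mp (by simpa using hM2)
  have hinfix : Letter5.lb :: (r₂.reverse ++ [Letter5.rb]) <:+: u₁ ++ Letter5.lb :: u₂ :=
    ⟨u₁, r₁.reverse, by rw [hu₂]; simp [List.append_assoc]⟩
  have hinf2 : Letter5.lb :: (r₂.reverse ++ [Letter5.rb]) <:+: flA vs := hinfix.trans hu
  obtain ⟨t, hpref, hsuf⟩ := List.infix_iff_prefix_suffix.mp hinf2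
  obtain ⟨t', rfl⟩ := hpref
  have hsuf' : Letter5.lb :: ((r₂.reverse ++ [Letter5.rb]) ++ t') <:+ flA vs := by
    simpa [List.append_assoc] using hsuf
  obtain ⟨vs₂, hvs₂, heq₂⟩ := suff_blocks vs _ hsuf'
  have hpref2 : ((Letter5.lb :: r₂.reverse) ++ [Letter5.rb]) <+: flA vs₂ := by
    rw [← heq₂]
    exact ⟨t', by simp [List.append_assoc]⟩
  obtain ⟨vs₁, hvs₁, heq₁⟩ := pref_blocks vs₂ _ hpref2
  refine ⟨vs₁, hvs₁.isInfix.trans hvs₂.isInfix, ?_, ?_⟩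
  · rw [← heq₁]
    simpa using hsubu'
  · rw [← heq₁]
    have h3 : (Letter5.lb :: (r₂.reverse ++ [Letter5.rb])).length ≤
        (u₁ ++ Letter5.lb :: u₂).length := hinfix.length_le
    simpa using h3

end OVAux
namespace OVAux

variable {d : ℕ}

def NoTwoZ (d : ℕ) (x y : Fin d → Bool) : Prop := ¬(x = Zv d ∧ y = Zv d)
def PairZ (d : ℕ) (x y : Fin d → Bool) : Prop := x = Zv d ∨ y = Zv d

lemma infix_append_cases {α : Type*} {ws l₁ l₂ : List α} (h : ws <:+: l₁ ++ l₂) :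
    ws <:+: l₁ ∨ ws <:+: l₂ ∨
      ∃ x y, ws = x ++ y ∧ x ≠ [] ∧ y ≠ [] ∧ x <:+ l₁ ∧ y <+: l₂ := by
  obtain ⟨p, s, hps⟩ := h
  have hws : ws = ((l₁ ++ l₂).drop p.length).take ws.length := by
    rw [← hps, show p ++ ws ++ s = p ++ (ws ++ s) from by simp [List.append_assoc],
      List.drop_left, List.take_left]
  rw [List.drop_append, List.take_append] at hws
  by_cases h1 : l₁.length ≤ p.length
  · right; left
    rw [List.drop_eq_nil_of_le h1] at hws
    simp only [List.take_nil, List.length_nil, Nat.sub_zero, List.nil_append] at hws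
    rw [hws]
    exact ((List.take_prefix _ _).isInfix).trans (List.drop_suffix _ _).isInfix
  · push_neg at h1
    by_cases h2 : ws.length ≤ l₁.length - p.length
    · left
      have h3 : ws.length - (l₁.drop p.length).length = 0 := by simp; omega
      rw [h3] at hws
      simp only [List.take_zero, List.append_nil] at hws
      rw [hws]
      exact ((List.take_prefix _ _).isInfix).trans (List.drop_suffix _ _).isInfix
    · push_neg at h2
      have hx : (l₁.drop p.length).take ws.length = l₁.drop p.length := by
        apply List.take_of_length_le
        simp
        omega
      rw [hx] at hws
      rw [Nat.sub_eq_zero_of_le (le_of_lt h1), List.drop_zero] at hws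
      by_cases h3 : l₂.take (ws.length - (l₁.drop p.length).length) = []
      · left
        rw [h3, List.append_nil] at hws
        rw [hws]
        exact (List.drop_suffix _ _).isInfix
      · right; right
        refine ⟨_, _, hws, ?_, h3, List.drop_suffix _ _, List.take_prefix _ _⟩
        intro hcon
        have h4 := congrArg List.length hcon
        simp at h4
        omega

lemma weakZ : ∀ (N : ℕ) (l : List (Fin d → Bool)), l.length ≤ N → Chain' (NoTwoZ d) l →
    count (Zv d) l ≤ (l.length + 1) / 2 := by
  intro N
  induction N with
  | zero =>
    intro l h _
    have h2 : l = [] := List.eq_nil_of_length_eq_zero (by omega)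
    subst h2; simp
  | succ N ihN =>
    intro l hlen hc
    cases l with
    | nil => simp
    | cons x l' =>
      by_cases hx : x = Zv d
      · subst hx
        cases l' with
        | nil => simp
        | cons y l'' =>
          have hR := (List.isChain_cons_cons.mp hc).1
          have hy : ¬(y = Zv d) := fun hcon => hR ⟨rfl, hcon⟩
          have hy2 : ¬(Zv d = y) := fun hcon => hy hcon.symm
          have hc'' : Chain' (NoTwoZ d) l'' := ((List.isChain_cons_cons.mp hc).2).tail
          have hb := ihN l'' (by simp at hlen; omega) hc''
          have e1 : count (Zv d) (Zv d :: y :: l'') = count (Zv d) l'' + 1 := by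
            simp [List.count_cons, hy2, hy]
          have e2 : (Zv d :: y :: l'').length = l''.length + 2 := by simp
          rw [e1, e2]
          omega
      · have hx2 : ¬(Zv d = x) := fun hcon => hx hcon.symm
        have hb := ihN l' (by simp at hlen; omega) hc.tail
        have e1 : count (Zv d) (x :: l') = count (Zv d) l' := by simp [List.count_cons, hx2, hx]
        rw [e1, List.length_cons]
        omega

lemma chain_pv (As : List (Fin d → Bool)) (hAs : ∀ v ∈ As, v ≠ Zv d) (hO : Ov d ≠ Zv d) :
    Chain' (NoTwoZ d) (pv As ++ [Ov d]) := by
  induction As with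
  | nil => simp [pv, Chain']
  | cons v As ih =>
    have h1 : v ≠ Zv d := hAs v (by simp)
    have h2 := ih (fun w hw => hAs w (by simp [hw]))
    rw [show pv (v :: As) ++ [Ov d] = v :: Zv d :: (pv As ++ [Ov d]) from by simp]
    refine List.isChain_cons_cons.mpr ⟨fun h => h1 h.1, ?_⟩
    refine List.isChain_cons.mpr ⟨?_, h2⟩
    intro y hy hcon
    cases As with
    | nil =>
      simp [pv] at hy
      exact hO (hy ▸ hcon.2)
    | cons v' As' =>
      simp [pv] at hy
      exact hAs v' (by simp) (hy ▸ hcon.2)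

lemma chainN (As : List (Fin d → Bool)) (hAs : ∀ v ∈ As, v ≠ Zv d) (hO : Ov d ≠ Zv d) :
    Chain' (NoTwoZ d) (wvl As) := by
  rw [wvl]
  refine List.isChain_cons_cons.mpr ⟨fun h => hO h.1, ?_⟩
  refine List.isChain_cons.mpr ⟨?_, chain_pv As hAs hO⟩
  intro y hy hcon
  cases As with
  | nil =>
    simp [pv] at hy
    exact hO (hy ▸ hcon.2)
  | cons v' As' =>
    simp [pv] at hy
    exact hAs v' (by simp) (hy ▸ hcon.2)

lemma chainS_pv (As : List (Fin d → Bool)) : Chain' (PairZ d) (pv As ++ [Ov d]) := by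
  induction As with
  | nil => simp [Chain']
  | cons v As ih =>
    rw [show pv (v :: As) ++ [Ov d] = v :: Zv d :: (pv As ++ [Ov d]) from by simp]
    exact List.isChain_cons_cons.mpr ⟨Or.inr rfl, List.isChain_cons.mpr ⟨fun y _ => Or.inl rfl, ih⟩⟩

lemma chainS (As : List (Fin d → Bool)) : Chain' (PairZ d) (wvl As) := by
  rw [wvl]
  exact List.isChain_cons_cons.mpr ⟨Or.inr rfl,
    List.isChain_cons.mpr ⟨fun y _ => Or.inl rfl, chainS_pv As⟩⟩

lemma shortseg {J : List (Fin d → Bool)} (hc : Chain' (PairZ d) J) (hz : Zv d ∉ J) :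
    J.length ≤ 1 := by
  cases J with
  | nil => simp
  | cons x J' =>
    cases J' with
    | nil => simp
    | cons y J'' =>
      rcases (List.isChain_cons_cons.mp hc).1 with h | h
      · subst h; simp at hz
      · subst h; simp at hz

lemma count_pv (As : List (Fin d → Bool)) (hAs : ∀ v ∈ As, v ≠ Zv d) :
    count (Zv d) (pv As) = As.length := by
  induction As with
  | nil => simp [pv]
  | cons v As ih =>
    have h1 : ¬(Zv d = v) := fun h => hAs v (by simp) h.symm
    rw [pv_cons]
    simp [List.count_cons, h1, Ne.symm h1, ih (fun w hw => hAs w (by simp [hw]))]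

lemma count_wvl (As : List (Fin d → Bool)) (hAs : ∀ v ∈ As, v ≠ Zv d) (hO : Ov d ≠ Zv d) :
    count (Zv d) (wvl As) = As.length + 1 := by
  have hO' : ¬(Zv d = Ov d) := fun h => hO h.symm
  simp [wvl, List.count_append, List.count_cons, count_pv As hAs, hO', hO]

lemma countZ_upper (As : List (Fin d → Bool)) (hAs : ∀ v ∈ As, v ≠ Zv d) (hO : Ov d ≠ Zv d)
    (ws : List (Fin d → Bool)) (hws : ws <:+: wvl As ++ wvl As)
    (hlen : ws.length ≤ 2 * As.length + 3) :
    count (Zv d) ws ≤ As.length + 1 := by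
  have hcW : count (Zv d) (wvl As) = As.length + 1 := count_wvl As hAs hO
  have hchain : Chain' (NoTwoZ d) (wvl As) := chainN As hAs hO
  rcases infix_append_cases hws with h | h | ⟨x, y, rfl, hxne, hyne, hx, hy⟩
  · exact le_of_le_of_eq (h.sublist.count_le _) hcW
  · exact le_of_le_of_eq (h.sublist.count_le _) hcW
  · have hwvlrev : (wvl As).reverse = Ov d :: (Ov d :: Zv d :: pv As).reverse := by
      rw [show wvl As = (Ov d :: Zv d :: pv As) ++ [Ov d] from by simp [wvl],
        List.reverse_append]
      simp
    have hchainrev : Chain' (NoTwoZ d) (Ov d :: Zv d :: pv As).reverse := by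
      have h1 : Chain' (NoTwoZ d) (Ov d :: Zv d :: pv As) :=
        hchain.prefix ⟨[Ov d], by simp [wvl]⟩
      rw [Chain', List.isChain_reverse]
      exact h1.imp (fun x y hxy hcon => hxy ⟨hcon.2, hcon.1⟩)
    have hxb : count (Zv d) x ≤ x.length / 2 := by
      obtain ⟨x0, z, hxz⟩ : ∃ x0 z, x.reverse = x0 :: z := by
        cases hh : x.reverse with
        | nil => exact absurd (by simpa using hh) hxne
        | cons a l => exact ⟨a, l, rfl⟩
      have hxrev : x.reverse <+: (wvl As).reverse := List.reverse_prefix.mpr hx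
      rw [hwvlrev, hxz] at hxrev
      obtain ⟨hx0, hzp⟩ := List.cons_prefix_cons.mp hxrev
      have hzc : Chain' (NoTwoZ d) z := hchainrev.prefix hzp
      have hzb := weakZ z.length z le_rfl hzc
      have hO' : ¬(Zv d = x0) := fun h => hO (hx0 ▸ h.symm)
      have hcx : count (Zv d) x = count (Zv d) z := by
        rw [← List.count_reverse, hxz]
        simp [List.count_cons, hO', Ne.symm hO']
      have hlx : x.length = z.length + 1 := by
        have h5 := congrArg List.length hxz
        simpa using h5
      omega
    have hyb : count (Zv d) y ≤ y.length / 2 := by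
      obtain ⟨y0, z, rfl⟩ : ∃ y0 z, y = y0 :: z := by
        cases y with
        | nil => exact absurd rfl hyne
        | cons a l => exact ⟨a, l, rfl⟩
      rw [wvl] at hy
      obtain ⟨hy0, hzp⟩ := List.cons_prefix_cons.mp hy
      have htl : Chain' (NoTwoZ d) (Zv d :: (pv As ++ [Ov d])) := by
        have h5 := hchain.tail
        simpa [wvl, Chain'] using h5
      have hzc : Chain' (NoTwoZ d) z := htl.prefix hzp
      have hzb := weakZ z.length z le_rfl hzc
      have hO' : ¬(Zv d = y0) := fun h => hO (hy0 ▸ h.symm)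
      have hcy : count (Zv d) (y0 :: z) = count (Zv d) z := by
        simp [List.count_cons, hO', Ne.symm hO']
      simp only [List.length_cons]
      omega
    rw [List.count_append]
    have hl : x.length + y.length ≤ 2 * As.length + 3 := by
      simpa using hlen
    omega

lemma mem_ofFn' {α : Type*} {n : ℕ} {f : Fin n → α} {v : α} (h : v ∈ List.ofFn f) :
    ∃ i, f i = v := by
  rcases List.mem_ofFn.mp h with ⟨i, hi⟩
  exact ⟨i, hi⟩

lemma mem_pv {w : Fin d → Bool} {l : List (Fin d → Bool)} (h : w ∈ pv l) :
    w ∈ l ∨ w = Zv d := by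
  induction l with
  | nil => simp [pv] at h
  | cons v l ih =>
    rw [pv_cons] at h
    simp only [List.mem_cons] at h
    rcases h with rfl | h
    · exact Or.inl (by simp)
    rcases h with rfl | h
    · exact Or.inr rfl
    · rcases ih h with h | h
      · exact Or.inl (by simp [h])
      · exact Or.inr h

lemma mem_wvl {w : Fin d → Bool} {As : List (Fin d → Bool)} (h : w ∈ wvl As) :
    w = Ov d ∨ w = Zv d ∨ w ∈ As := by
  rw [wvl] at h
  rcases List.mem_cons.mp h with rfl | h
  · exact Or.inl rfl
  rcases List.mem_cons.mp h with rfl | h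
  · exact Or.inr (Or.inl rfl)
  rcases List.mem_append.mp h with h | h
  · rcases mem_pv h with h | h
    · exact Or.inr (Or.inr h)
    · exact Or.inr (Or.inl h)
  · exact Or.inl (by simpa using h)

lemma one_mem_psiBvec {v : Fin d → Bool} (k : Fin d) (hk : v k = true) :
    Letter5.one ∈ psiBvec v := by
  rw [psiBvec, List.mem_flatten]
  refine ⟨psiB (v k), ?_, ?_⟩
  · exact List.mem_ofFn.mpr ⟨k, rfl⟩
  · rw [hk]; simp [psiB]

lemma one_not_mem_blockA_Ov : Letter5.one ∉ blockA (Ov d) := by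
  rw [blockA]
  intro h
  simp only [List.mem_cons, List.mem_append, List.mem_singleton] at h
  rcases h with h | h
  · simp at h
  rcases h with h | h
  · rw [psiAvec] at h
    rw [List.mem_flatten] at h
    obtain ⟨l, hl, hone⟩ := h
    obtain ⟨k, hk⟩ := mem_ofFn' hl
    rw [← hk] at hone
    simp [Ov, psiA] at hone
  · simp at h

lemma goodI {n : ℕ} (hn : 1 ≤ n) (hd : 1 ≤ d) (a b : Fin n → Fin d → Bool)
    (hnorth : ¬∃ i j : Fin n, ∀ k, (a i k && b j k) = false)
    (hO : Ov d ≠ Zv d)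
    (hbj : ∀ j : Fin n, b j ≠ Zv d)
    (u : Fin d → Bool) (hu : u = Ov d ∨ ∃ j, u = b j)
    (I : List (Fin d → Bool)) (hne : I ≠ [])
    (hI : I <:+: wvl (List.ofFn a) ++ wvl (List.ofFn a))
    (hemb : blockB u <+ flA I) :
    Zv d ∈ I := by
  by_contra hz
  cases I with
  | nil => exact hne rfl
  | cons w1 I' =>
    cases I' with
    | nil =>
      have hemb1 : blockB u <+ blockA w1 := by simpa using hemb
      have horth := blockB_sublist_blockA_orth hemb1
      have hw1 : w1 ∈ wvl (List.ofFn a) ++ wvl (List.ofFn a) := hI.sublist.subset (by simp)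
      have hw1' : w1 = Ov d ∨ w1 = Zv d ∨ w1 ∈ List.ofFn a := by
        rcases List.mem_append.mp hw1 with h | h <;> exact mem_wvl h
      rcases hu with rfl | ⟨j, rfl⟩
      · have hww : w1 = Zv d := by
          funext k
          have h2 := horth k
          simpa [Ov, Zv] using h2
        exact hz (by simp [hww])
      · rcases hw1' with rfl | rfl | hmem
        · refine absurd (funext fun k => ?_ : b j = Zv d) (hbj j)
          have h2 := horth k
          simpa [Ov, Zv] using h2
        · exact hz (by simp)
        · obtain ⟨i, rfl⟩ := mem_ofFn' hmem
          exact hnorth ⟨i, j, horth⟩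
    | cons w2 I'' =>
      have hIOO : w1 :: w2 :: I'' = [Ov d, Ov d] := by
        rcases infix_append_cases hI with h | h | ⟨x, y, hxy, hxne, hyne, hx, hy⟩
        · have h5 := shortseg ((chainS (List.ofFn a)).infix h) hz
          simp at h5
        · have h5 := shortseg ((chainS (List.ofFn a)).infix h) hz
          simp at h5
        · have hxz : Zv d ∉ x := fun hc => hz (by rw [hxy]; exact List.mem_append_left _ hc)
          have hyz : Zv d ∉ y := fun hc => hz (by rw [hxy]; exact List.mem_append_right _ hc)
          have hx1 : x.length ≤ 1 := shortseg ((chainS (List.ofFn a)).suffix hx) hxz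
          have hy1 : y.length ≤ 1 := shortseg ((chainS (List.ofFn a)).prefix hy) hyz
          have hxlen : x.length = 1 := by
            cases x with
            | nil => exact absurd rfl hxne
            | cons a1 x' =>
              simp only [List.length_cons] at hx1 ⊢
              omega
          have hylen : y.length = 1 := by
            cases y with
            | nil => exact absurd rfl hyne
            | cons a1 y' =>
              simp only [List.length_cons] at hy1 ⊢
              omega
          obtain ⟨x0, rfl⟩ := List.length_eq_one_iff.mp hxlen
          obtain ⟨y0, rfl⟩ := List.length_eq_one_iff.mp hylen
          obtain ⟨p, hp⟩ := hx
          have hx0 : x0 = Ov d := by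
            have h1 := congrArg List.getLast? hp
            rw [List.getLast?_concat] at h1
            rw [show wvl (List.ofFn a) = (Ov d :: Zv d :: pv (List.ofFn a)) ++ [Ov d] from by
              simp [wvl], List.getLast?_concat] at h1
            simpa using h1
          have hy0 : y0 = Ov d := by
            rw [wvl] at hy
            exact (List.cons_prefix_cons.mp hy).1
          rw [hxy, hx0, hy0]
          rfl
      rw [hIOO] at hemb
      have hone : Letter5.one ∈ blockB u := by
        rcases hu with rfl | ⟨j, rfl⟩
        · exact List.mem_cons_of_mem _ (List.mem_append_left _ (one_mem_psiBvec ⟨0, hd⟩ rfl))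
        · have hex : ∃ k, b j k = true := by
            by_contra hcon
            push_neg at hcon
            exact hbj j (funext fun k => by simpa [Zv] using hcon k)
          obtain ⟨k, hk⟩ := hex
          exact List.mem_cons_of_mem _ (List.mem_append_left _ (one_mem_psiBvec k hk))
      have h2 := hemb.subset hone
      have h3 : Letter5.one ∈ blockA (Ov d) := by
        simp only [flA_cons, flA_nil, List.append_nil, List.mem_append] at h2
        tauto
      exact one_not_mem_blockA_Ov h3

lemma lower_aux {n : ℕ} (hn : 1 ≤ n) (hd : 1 ≤ d) (a b : Fin n → Fin d → Bool)
    (hnorth : ¬∃ i j : Fin n, ∀ k, (a i k && b j k) = false)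
    (hO : Ov d ≠ Zv d) (hbj : ∀ j : Fin n, b j ≠ Zv d) :
    ∀ (us : List (Fin d → Bool)) (Is : List (List (Fin d → Bool))),
      Forall₂ (fun u I => I ≠ [] ∧ blockB u <+ flA I) us Is →
      (∀ u ∈ us, u = Ov d ∨ ∃ j, u = b j) →
      (∀ I ∈ Is, I <:+: wvl (List.ofFn a) ++ wvl (List.ofFn a)) →
      us.length ≤ count (Zv d) Is.flatten := by
  intro us Is h
  induction h with
  | nil => simp
  | @cons u I us' Is' hg _ ih =>
    intro hus hIs
    rw [List.flatten_cons, List.count_append]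
    have h1 : Zv d ∈ I := goodI hn hd a b hnorth hO hbj u (hus u (by simp)) I hg.1
      (hIs I (by simp)) hg.2
    have h2 := List.count_pos_iff.mpr h1
    have h3 := ih (fun u hu => hus u (by simp [hu])) (fun I hI => hIs I (by simp [hI]))
    simp only [List.length_cons]
    omega

lemma backward {n : ℕ} (hn : 1 ≤ n) (hd : 1 ≤ d) (a b : Fin n → Fin d → Bool)
    (hP : PSubseq (wordW a).length (wordU b) (wordW a ++ wordW a)) :
    ∃ i j : Fin n, ∀ k, (a i k && b j k) = false := by
  by_contra hnorth
  have hO : Ov d ≠ Zv d := by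
    intro h
    have h2 := congrFun h ⟨0, hd⟩
    simp [Ov, Zv] at h2
  have hbj : ∀ j : Fin n, b j ≠ Zv d := by
    intro j hcon
    exact hnorth ⟨⟨0, hn⟩, j, fun k => by rw [hcon]; simp [Zv]⟩
  have hAsne : ∀ v ∈ List.ofFn a, v ≠ Zv d := by
    intro v hv hcon
    obtain ⟨i, rfl⟩ := mem_ofFn' hv
    exact hnorth ⟨i, ⟨0, hn⟩, fun k => by rw [hcon]; simp [Zv]⟩
  obtain ⟨u, hinf, hlen, hsub⟩ := hP
  have hWW : wordW a ++ wordW a = flA (wvl (List.ofFn a) ++ wvl (List.ofFn a)) := by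
    rw [flA_append, ← wordW_eq]
  rw [hWW] at hinf
  obtain ⟨M, hM⟩ := flB_shape (Ov d :: (List.ofFn b ++ [Ov d])) (by simp)
  have hsub' : (Letter5.lb :: (M ++ [Letter5.rb])) <+ u := by
    rw [← hM, ← wordU_eq]; exact hsub
  obtain ⟨vs', hvs', hsub2, hlen2⟩ := trim _ M u hinf hsub'
  have hwvl : (wvl (List.ofFn a)).length = 2 * n + 3 := by
    simp [wvl, length_pv, List.length_ofFn] <;> omega
  have hlenW : (wordW a).length = (2 * n + 3) * (3 * d + 2) := by
    rw [wordW_eq, length_flA, hwvl]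
  have hlen3 : vs'.length ≤ 2 * n + 3 := by
    have h4 := hlen2.trans hlen
    rw [length_flA, hlenW] at h4
    exact Nat.le_of_mul_le_mul_right h4 (by omega)
  have hsub3 : flB (Ov d :: (List.ofFn b ++ [Ov d])) <+ flA vs' := by
    rw [hM]; exact hsub2
  obtain ⟨Is, gl, hdecomp, hf⟩ := emb _ _ hsub3
  have hIinf : ∀ I ∈ Is, I <:+: wvl (List.ofFn a) ++ wvl (List.ofFn a) := by
    intro I hmem
    have hpre : Is.flatten <+: vs' := ⟨gl, hdecomp.symm⟩
    exact ((List.infix_of_mem_flatten hmem).trans hpre.isInfix).trans hvs'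
  have hus : ∀ v ∈ Ov d :: (List.ofFn b ++ [Ov d]), v = Ov d ∨ ∃ j, v = b j := by
    intro v hv
    rcases List.mem_cons.mp hv with rfl | hv
    · exact Or.inl rfl
    rcases List.mem_append.mp hv with hv | hv
    · obtain ⟨j, hj⟩ := mem_ofFn' hv
      exact Or.inr ⟨j, hj.symm⟩
    · exact Or.inl (by simpa using hv)
  have hlow := lower_aux hn hd a b hnorth hO hbj _ _ hf hus hIinf
  have hup := countZ_upper (List.ofFn a) hAsne hO vs' hvs' (by simpa using hlen3)
  have hcflat : count (Zv d) Is.flatten ≤ count (Zv d) vs' := by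
    rw [hdecomp, List.count_append]
    omega
  have hlen_us : (Ov d :: (List.ofFn b ++ [Ov d])).length = n + 2 := by simp
  rw [hlen_us] at hlow
  simp only [List.length_ofFn] at hup
  omega

end OVAux

/-- (Claim II) There are orthogonal vectors `a_i ∈ A` and `b_j ∈ B` iff
`U` is a `|W|`-subsequence of `WW`. -/
theorem orthogonal_vectors_iff_U_psubseq_WW {n d : ℕ} (hn : 1 ≤ n) (hd : 1 ≤ d)
    (a b : Fin n → Fin d → Bool) :
    (∃ i j : Fin n, ∀ k, (a i k && b j k) = false) ↔
      PSubseq (wordW a).length (wordU b) (wordW a ++ wordW a) := by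
  constructor
  · rintro ⟨i, j, h⟩
    exact OVAux.forward hn hd a b i j h
  · intro h
    exact OVAux.backward hn hd a b h
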